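/- arXiv:1307.3654 — 3 statements merged into one kernel-verified Lean document; each statement's English description precedes it below -/
import Mathlib

section
/- Let μ be a measure on a measurable subspace X of the extended real line, n ∈ ℕ, and X₁,…,X_n the coordinate projections on Xⁿ. Then the pair (min_{i=1}^n X_i, max_{i=1}^n X_i) is complete for the model {μ(·|I)^{⊗n} : I an interval in X with 0 < μ(I) < ∞}, and is also sufficient if μ is σ-finite. -/
open MeasureTheory

/-- A sub-σ-algebra `C` of `mX` is (Lehmann–Scheffé) complete for the model `M`:
every `C`-measurable real function, integrable with respect to every member of `M`
and with expectation `0` under every member, vanishes `P`-a.s. for every `P ∈ M`. -/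
def IsLSComplete {X : Type*} (mX : MeasurableSpace X) (C : MeasurableSpace X)
    (M : Set (@Measure X mX)) : Prop :=
  ∀ h : X → ℝ, Measurable[C] h → (∀ P ∈ M, Integrable h P) →
    (∀ P ∈ M, ∫ x, h x ∂P = 0) → ∀ P ∈ M, h =ᵐ[P] 0

/-- A sub-σ-algebra `C` of `mX` is sufficient for the model `M`: for every
`mX`-measurable set `A` there is a single `C`-measurable version of the conditional
probability of `A` given `C`, valid simultaneously for all `P ∈ M`. -/
def IsLSSufficient {X : Type*} (mX : MeasurableSpace X) (C : MeasurableSpace X)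
    (M : Set (@Measure X mX)) : Prop :=
  ∀ A : Set X, MeasurableSet[mX] A →
    ∃ g : X → ℝ, Measurable[C] g ∧
      ∀ P ∈ M, ∀ s : Set X, MeasurableSet[C] s →
        ∫ x in s, g x ∂P = (P (s ∩ A)).toReal

/-- The conditional law `μ(·|E) = μ(· ∩ E)/μ(E)`. -/
noncomputable def condLaw {X : Type*} [mX : MeasurableSpace X] (μ : Measure X)
    (E : Set X) : Measure X :=
  (μ E)⁻¹ • μ.restrict E

namespace MinMaxAux

open MeasurableSpace Set
open scoped ENNReal

variable {S : Set EReal} {n : ℕ}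

/-- convex hull in `EReal` of a set of points of `S`. -/
def hull (I : Set S) : Set EReal := {y | ∃ x ∈ I, ∃ z ∈ I, (x : EReal) ≤ y ∧ y ≤ (z : EReal)}

theorem hull_ordConnected (I : Set S) : (hull I).OrdConnected := by
  constructor
  rintro a ⟨x, hx, z, hz, hxa, _⟩ b ⟨x', hx', z', hz', _, hbz'⟩ c hc
  exact ⟨x, hx, z', hz', hxa.trans hc.1, hc.2.trans hbz'⟩

theorem measurableSet_hull (I : Set S) : MeasurableSet (hull I) :=
  (hull_ordConnected I).measurableSet

theorem mem_hull_iff {I : Set S}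
    (hIv : ∀ x ∈ I, ∀ z ∈ I, ∀ y : S, x ≤ y → y ≤ z → y ∈ I) (y : S) :
    (y : EReal) ∈ hull I ↔ y ∈ I := by
  constructor
  · rintro ⟨x, hx, z, hz, hxy, hyz⟩
    exact hIv x hx z hz y (Subtype.coe_le_coe.mp hxy) (Subtype.coe_le_coe.mp hyz)
  · intro hy; exact ⟨y, hy, y, hy, le_rfl, le_rfl⟩

theorem measurableSet_of_interval {I : Set S}
    (hIv : ∀ x ∈ I, ∀ z ∈ I, ∀ y : S, x ≤ y → y ≤ z → y ∈ I) :
    MeasurableSet I := by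
  have : I = Subtype.val ⁻¹' hull I := by
    ext y; simp [mem_hull_iff hIv y]
  rw [this]
  exact measurable_subtype_coe (measurableSet_hull I)

/-- the (min, max) statistic -/
noncomputable def T (x : Fin n → S) : EReal × EReal :=
  ((⨅ i, (x i : EReal), ⨆ i, (x i : EReal)) : EReal × EReal)

theorem measurable_T : Measurable (T (S := S) (n := n)) :=
  (Measurable.iInf fun i => measurable_subtype_coe.comp (measurable_pi_apply i)).prodMk
    (Measurable.iSup fun i => measurable_subtype_coe.comp (measurable_pi_apply i))

theorem T_preimage_box (a b : EReal) :
    T ⁻¹' (Ici a ×ˢ Iic b) = pi univ (fun _ : Fin n => {y : S | (y : EReal) ∈ Icc a b}) := by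
  ext x
  simp only [T, mem_preimage, mem_prod, mem_Ici, mem_Iic, le_iInf_iff, iSup_le_iff,
    mem_univ_pi, mem_setOf_eq, mem_Icc]
  exact ⟨fun h i => ⟨h.1 i, h.2 i⟩, fun h => ⟨fun i => (h i).1, fun i => (h i).2⟩⟩

theorem T_preimage_hull (hn : 0 < n) {I : Set S}
    (hIv : ∀ x ∈ I, ∀ z ∈ I, ∀ y : S, x ≤ y → y ≤ z → y ∈ I) :
    T ⁻¹' (hull I ×ˢ hull I) = pi univ (fun _ : Fin n => I) := by
  haveI : Nonempty (Fin n) := ⟨⟨0, hn⟩⟩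
  ext x
  simp only [T, mem_preimage, mem_prod, mem_univ_pi]
  constructor
  · rintro ⟨h1, h2⟩
    obtain ⟨i₀, hi₀⟩ := Finite.exists_min fun i => (x i : EReal)
    obtain ⟨i₁, hi₁⟩ := Finite.exists_max fun i => (x i : EReal)
    have e0 : (⨅ i, (x i : EReal)) = (x i₀ : EReal) :=
      le_antisymm (iInf_le _ i₀) (le_iInf hi₀)
    have e1 : (⨆ i, (x i : EReal)) = (x i₁ : EReal) :=
      le_antisymm (iSup_le hi₁) (le_iSup (fun i => ((x i : EReal))) i₁)
    rw [e0] at h1; rw [e1] at h2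
    have h0 : x i₀ ∈ I := (mem_hull_iff hIv _).mp h1
    have h1' : x i₁ ∈ I := (mem_hull_iff hIv _).mp h2
    intro i
    exact hIv _ h0 _ h1' (x i) (Subtype.coe_le_coe.mp (hi₀ i)) (Subtype.coe_le_coe.mp (hi₁ i))
  · intro h
    obtain ⟨i₀, hi₀⟩ := Finite.exists_min fun i => (x i : EReal)
    obtain ⟨i₁, hi₁⟩ := Finite.exists_max fun i => (x i : EReal)
    have e0 : (⨅ i, (x i : EReal)) = (x i₀ : EReal) :=
      le_antisymm (iInf_le _ i₀) (le_iInf hi₀)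
    have e1 : (⨆ i, (x i : EReal)) = (x i₁ : EReal) :=
      le_antisymm (iSup_le hi₁) (le_iSup (fun i => ((x i : EReal))) i₁)
    rw [e0, e1]
    exact ⟨(mem_hull_iff hIv _).mpr (h i₀), (mem_hull_iff hIv _).mpr (h i₁)⟩

/-- the sub-σ-algebra generated by (min, max) -/
noncomputable def C (S : Set EReal) (n : ℕ) : MeasurableSpace (Fin n → S) :=
  MeasurableSpace.comap (T (S := S) (n := n)) inferInstance

theorem hC_le : C S n ≤ MeasurableSpace.pi := measurable_T.comap_le

theorem measurableSet_C_pi (hn : 0 < n) {I : Set S}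
    (hIv : ∀ x ∈ I, ∀ z ∈ I, ∀ y : S, x ≤ y → y ≤ z → y ∈ I) :
    MeasurableSet[C S n] (pi univ (fun _ : Fin n => I)) :=
  ⟨hull I ×ˢ hull I, (measurableSet_hull I).prod (measurableSet_hull I), T_preimage_hull hn hIv⟩

section MeasureLemmas

variable {X : Type*} [MeasurableSpace X]

theorem sigmaFinite_smul (m : Measure X) [SigmaFinite m] {c : ℝ≥0∞} (hc : c ≠ ⊤) :
    SigmaFinite (c • m) := by
  refine ⟨⟨⟨spanningSets m, fun _ => trivial, fun i => ?_, iUnion_spanningSets m⟩⟩⟩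
  rw [Measure.smul_apply, smul_eq_mul]
  exact ENNReal.mul_lt_top hc.lt_top (measure_spanningSets_lt_top m i)

theorem pi_smul (n : ℕ) (m : Measure X) [SigmaFinite m] {c : ℝ≥0∞} (hc : c ≠ ⊤) :
    Measure.pi (fun _ : Fin n => c • m) = c ^ n • Measure.pi (fun _ : Fin n => m) := by
  haveI := sigmaFinite_smul m hc
  refine Measure.pi_eq fun s hs => ?_
  simp only [Measure.smul_apply, smul_eq_mul, Measure.pi_pi, Finset.prod_mul_distrib,
    Finset.prod_const, Finset.card_univ, Fintype.card_fin]

theorem pi_restrict (n : ℕ) (m : Measure X) [SigmaFinite m] {B : Set X}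
    (hB : MeasurableSet B) :
    Measure.pi (fun _ : Fin n => m.restrict B)
      = (Measure.pi (fun _ : Fin n => m)).restrict (pi univ fun _ => B) := by
  refine Measure.pi_eq fun s hs => ?_
  rw [Measure.restrict_apply (MeasurableSet.univ_pi hs), ← pi_inter_distrib, Measure.pi_pi]
  simp only [Measure.restrict_apply (hs _)]

theorem pi_zero {n : ℕ} (hn : 0 < n) :
    Measure.pi (fun _ : Fin n => (0 : Measure X)) = 0 := by
  rw [← Measure.measure_univ_eq_zero, Measure.pi_univ]
  simp [hn.ne']

theorem condLaw_isProbability (μ : Measure X) {I : Set X} (h0 : μ I ≠ 0) (ht : μ I ≠ ⊤) :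
    IsProbabilityMeasure (condLaw μ I) := by
  constructor
  rw [condLaw, Measure.smul_apply, Measure.restrict_apply_univ, smul_eq_mul,
    ENNReal.inv_mul_cancel h0 ht]

theorem condLaw_smul (μ : Measure X) {I : Set X} (h0 : μ I ≠ 0) (ht : μ I ≠ ⊤) :
    (μ I) • condLaw μ I = μ.restrict I := by
  rw [condLaw, smul_smul, ENNReal.mul_inv_cancel h0 ht, one_smul]

theorem fin_withDensity (P : Measure X) [IsFiniteMeasure P]
    {f : X → ℝ} (hf : Integrable f P) :
    (P.withDensity fun x => ENNReal.ofReal (f x)) univ < ⊤ := by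
  rw [withDensity_apply _ MeasurableSet.univ, setLIntegral_univ]
  refine lt_of_le_of_lt (lintegral_mono fun x => ?_) hf.2
  rw [← ofReal_norm, Real.norm_eq_abs]
  exact ENNReal.ofReal_le_ofReal (le_abs_self _)

theorem ae_zero_of_setIntegral_zero {m m0 : MeasurableSpace X} (hle : m ≤ m0)
    {P : Measure X} {h : X → ℝ} (hmeas : Measurable[m] h) (hint : Integrable h P)
    (h0 : ∀ s, MeasurableSet[m] s → ∫ x in s, h x ∂P = 0) :
    h =ᵐ[P] 0 := by
  have hp : MeasurableSet[m] {x | 0 < h x} := hmeas measurableSet_Ioi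
  have hm : MeasurableSet[m] {x | h x < 0} := hmeas measurableSet_Iio
  have hppos : ∀ᵐ x ∂(P.restrict {x | 0 < h x}), 0 ≤ h x := by
    filter_upwards [ae_restrict_mem (hle _ hp)] with x hx using hx.le
  have h1 : h =ᵐ[P.restrict {x | 0 < h x}] 0 :=
    (integral_eq_zero_iff_of_nonneg_ae hppos (hint.restrict)).mp (h0 _ hp)
  have h2 : (-h) =ᵐ[P.restrict {x | h x < 0}] 0 := by
    have hmneg : ∀ᵐ x ∂(P.restrict {x | h x < 0}), 0 ≤ -h x := by
      filter_upwards [ae_restrict_mem (hle _ hm)] with x hx using by simpa using hx.le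
    refine (integral_eq_zero_iff_of_nonneg_ae hmneg hint.neg.restrict).mp ?_
    rw [integral_neg, h0 _ hm, neg_zero]
  have hP1 : P {x | 0 < h x} = 0 := by
    rw [Filter.EventuallyEq, ae_restrict_iff' (hle _ hp)] at h1
    rw [ae_iff] at h1
    refine measure_mono_null (fun x hx => ?_) h1
    simp only [mem_setOf_eq, Pi.zero_apply]
    push_neg
    exact ⟨hx, ne_of_gt hx⟩
  have hP2 : P {x | h x < 0} = 0 := by
    rw [Filter.EventuallyEq, ae_restrict_iff' (hle _ hm)] at h2
    rw [ae_iff] at h2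
    refine measure_mono_null (fun x hx => ?_) h2
    simp only [mem_setOf_eq, Pi.neg_apply, Pi.zero_apply]
    push_neg
    exact ⟨hx, by simpa using ne_of_lt hx⟩
  rw [Filter.EventuallyEq, ae_iff]
  refine measure_mono_null (fun x hx => ?_) (measure_union_null hP1 hP2)
  simp only [mem_setOf_eq, Pi.zero_apply] at hx
  rcases lt_or_gt_of_ne hx with hlt | hgt
  · exact Or.inr hlt
  · exact Or.inl hgt

end MeasureLemmas

def boxes (S : Set EReal) (n : ℕ) : Set (Set (Fin n → S)) :=
  {s | ∃ a b : EReal, T ⁻¹' (Ici a ×ˢ Iic b) = s}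

theorem isPiSystem_boxes : IsPiSystem (boxes S n) := by
  rintro _ ⟨a, b, rfl⟩ _ ⟨a', b', rfl⟩ _
  exact ⟨a ⊔ a', b ⊓ b', by
    rw [← preimage_inter, prod_inter_prod, Ici_inter_Ici, Iic_inter_Iic]⟩

theorem prod_eq_generateFrom_boxes :
    (inferInstance : MeasurableSpace (EReal × EReal)) =
      generateFrom (image2 (· ×ˢ ·) (range Ici) (range (Iic (α := EReal)))) := by
  have h1 : (inferInstance : MeasurableSpace EReal) = .generateFrom (range Ici) :=
    BorelSpace.measurable_eq.trans (borel_eq_generateFrom_Ici EReal)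
  have h2 : (inferInstance : MeasurableSpace EReal) = .generateFrom (range Iic) :=
    BorelSpace.measurable_eq.trans (borel_eq_generateFrom_Iic EReal)
  have hspan1 : IsCountablySpanning (range (Ici (α := EReal))) :=
    ⟨fun _ => Ici ⊥, fun _ => mem_range_self _, by simp [iUnion_const]⟩
  have hspan2 : IsCountablySpanning (range (Iic (α := EReal))) :=
    ⟨fun _ => Iic ⊤, fun _ => mem_range_self _, by simp [iUnion_const]⟩
  rw [← generateFrom_prod_eq hspan1 hspan2]
  show @Prod.instMeasurableSpace _ _ _ _ = _
  rw [← h1, ← h2]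

theorem C_eq_generateFrom : C S n = generateFrom (boxes S n) := by
  rw [C, prod_eq_generateFrom_boxes, comap_generateFrom]
  congr 1
  ext s
  constructor
  · rintro ⟨_, ⟨_, ⟨a, rfl⟩, _, ⟨b, rfl⟩, rfl⟩, rfl⟩
    exact ⟨a, b, rfl⟩
  · rintro ⟨a, b, rfl⟩
    exact ⟨Ici a ×ˢ Iic b, mem_image2_of_mem (mem_range_self a) (mem_range_self b), rfl⟩

theorem setIntegral_zero_on_C {P : Measure (Fin n → S)} [IsFiniteMeasure P]
    {h : (Fin n → S) → ℝ} (hint : Integrable h P)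
    (hbox : ∀ a b : EReal, ∫ x in T ⁻¹' (Ici a ×ˢ Iic b), h x ∂P = 0) :
    ∀ s, MeasurableSet[C S n] s → ∫ x in s, h x ∂P = 0 := by
  set κp := P.withDensity fun x => ENNReal.ofReal (h x) with hκp
  set κm := P.withDensity fun x => ENNReal.ofReal (-h x) with hκm
  haveI : IsFiniteMeasure κp := ⟨fin_withDensity P hint⟩
  haveI : IsFiniteMeasure κm := ⟨fin_withDensity P hint.neg⟩
  have hmeasb : ∀ a b : EReal, MeasurableSet[C S n] (T ⁻¹' (Ici a ×ˢ Iic b)) :=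
    fun a b => ⟨Ici a ×ˢ Iic b, (measurableSet_Ici.prod measurableSet_Iic), rfl⟩
  have hi : ∀ s : Set (Fin n → S), MeasurableSet s →
      ∫ x in s, h x ∂P = (κp s).toReal - (κm s).toReal := by
    intro s hs
    rw [hκp, hκm, withDensity_apply _ hs, withDensity_apply _ hs]
    exact integral_eq_lintegral_pos_part_sub_lintegral_neg_part (hint.restrict (s := s))
  have heq : ∀ s : Set (Fin n → S), MeasurableSet s → ∫ x in s, h x ∂P = 0 → κp s = κm s := by
    intro s hs h0
    rw [hi s hs] at h0
    exact (ENNReal.toReal_eq_toReal_iff' (measure_ne_top _ _) (measure_ne_top _ _)).mp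
      (sub_eq_zero.mp h0)
  have huniv : (univ : Set (Fin n → S))
      = T (S := S) (n := n) ⁻¹' (Ici (⊥ : EReal) ×ˢ Iic (⊤ : EReal)) := by
    simp
  have htrim : κp.trim hC_le = κm.trim hC_le := by
    refine ext_of_generate_finite (boxes S n) C_eq_generateFrom isPiSystem_boxes ?_ ?_
    · rintro _ ⟨a, b, rfl⟩
      rw [trim_measurableSet_eq hC_le (hmeasb a b), trim_measurableSet_eq hC_le (hmeasb a b)]
      exact heq _ (hC_le _ (hmeasb a b)) (hbox a b)
    · rw [trim_measurableSet_eq hC_le MeasurableSet.univ, trim_measurableSet_eq hC_le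
        MeasurableSet.univ]
      refine heq _ MeasurableSet.univ ?_
      rw [huniv]; exact hbox ⊥ ⊤
  intro s hs
  rw [hi s (hC_le _ hs)]
  have : κp s = κm s := by
    rw [← trim_measurableSet_eq hC_le hs, ← trim_measurableSet_eq hC_le hs, htrim]
  rw [this, sub_self]

/-- the model -/
def M (S : Set EReal) (μ : Measure S) (n : ℕ) : Set (Measure (Fin n → S)) :=
  {P : Measure (Fin n → S) | ∃ I : Set S,
    (∀ x ∈ I, ∀ z ∈ I, ∀ y : S, x ≤ y → y ≤ z → y ∈ I) ∧ 0 < μ I ∧ μ I < ⊤ ∧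
    P = Measure.pi fun _ : Fin n => condLaw μ I}

theorem completeness (S : Set EReal) (μ : Measure S) (n : ℕ) (hn : 0 < n) :
    IsLSComplete MeasurableSpace.pi (C S n) (M S μ n) := by
  intro h hmeas hint hzero P hP
  obtain ⟨I₀, hIv, hpos, hfin, rfl⟩ := hP
  have hP' : (Measure.pi fun _ : Fin n => condLaw μ I₀) ∈ M S μ n := ⟨I₀, hIv, hpos, hfin, rfl⟩
  haveI : IsProbabilityMeasure (condLaw μ I₀) := condLaw_isProbability μ hpos.ne' hfin.ne
  have hI₀m : MeasurableSet I₀ := measurableSet_of_interval hIv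
  have hbox : ∀ a b : EReal,
      ∫ x in T ⁻¹' (Ici a ×ˢ Iic b), h x ∂(Measure.pi fun _ : Fin n => condLaw μ I₀) = 0 := by
    intro a b
    set B : Set S := {y : S | (y : EReal) ∈ Icc a b} with hBdef
    have hB : MeasurableSet B := measurable_subtype_coe measurableSet_Icc
    rw [T_preimage_box, ← pi_restrict n (condLaw μ I₀) hB]
    have h1 : (condLaw μ I₀).restrict B = (μ I₀)⁻¹ • μ.restrict (B ∩ I₀) := by
      rw [condLaw, Measure.restrict_smul, Measure.restrict_restrict hB]
    set J := B ∩ I₀ with hJdef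
    have hJv : ∀ x ∈ J, ∀ z ∈ J, ∀ y : S, x ≤ y → y ≤ z → y ∈ J := by
      rintro x ⟨hxB, hxI⟩ z ⟨hzB, hzI⟩ y hxy hyz
      refine ⟨⟨?_, ?_⟩, hIv x hxI z hzI y hxy hyz⟩
      · exact le_trans hxB.1 (Subtype.coe_le_coe.mpr hxy)
      · exact le_trans (Subtype.coe_le_coe.mpr hyz) hzB.2
    rcases eq_or_ne (μ J) 0 with hJ0 | hJ0
    · have hz : (condLaw μ I₀).restrict B = 0 := by
        rw [h1, Measure.restrict_eq_zero.mpr hJ0, smul_zero]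
      rw [show (fun _ : Fin n => (condLaw μ I₀).restrict B) = fun _ : Fin n => (0 : Measure S)
        from funext fun _ => hz, pi_zero hn, integral_zero_measure]
    · have hJfin : μ J < ⊤ := lt_of_le_of_lt (measure_mono inter_subset_right) hfin
      have hc : (condLaw μ I₀).restrict B = ((μ I₀)⁻¹ * μ J) • condLaw μ J := by
        rw [h1, ← condLaw_smul μ hJ0 hJfin.ne, smul_smul]
      have hcne : (μ I₀)⁻¹ * μ J ≠ ⊤ :=
        ENNReal.mul_ne_top (ENNReal.inv_ne_top.mpr hpos.ne') hJfin.ne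
      haveI : IsProbabilityMeasure (condLaw μ J) := condLaw_isProbability μ hJ0 hJfin.ne
      rw [show (fun _ : Fin n => (condLaw μ I₀).restrict B)
          = fun _ : Fin n => ((μ I₀)⁻¹ * μ J) • condLaw μ J from funext fun _ => hc,
        pi_smul n _ hcne, integral_smul_measure,
        hzero _ ⟨J, hJv, pos_iff_ne_zero.mpr hJ0, hJfin, rfl⟩, smul_zero]
  exact ae_zero_of_setIntegral_zero hC_le hmeas (hint _ hP')
    (setIntegral_zero_on_C (hint _ hP') hbox)


theorem sufficiency (S : Set EReal) (μ : Measure S) (n : ℕ) (hn : 0 < n) [SigmaFinite μ] :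
    IsLSSufficient MeasurableSpace.pi (C S n) (M S μ n) := by
  intro A hA
  by_cases hF : Nonempty {I : Set S //
      (∀ x ∈ I, ∀ z ∈ I, ∀ y : S, x ≤ y → y ≤ z → y ∈ I) ∧ 0 < μ I ∧ μ I < ⊤}
  swap
  · refine ⟨0, measurable_const, ?_⟩
    rintro P ⟨I, hIv, hpos, hfin, rfl⟩ s hs
    exact absurd ⟨⟨I, hIv, hpos, hfin⟩⟩ hF
  set ι := {I : Set S //
    (∀ x ∈ I, ∀ z ∈ I, ∀ y : S, x ≤ y → y ≤ z → y ∈ I) ∧ 0 < μ I ∧ μ I < ⊤} with hι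
  set ρ : Measure (Fin n → S) := Measure.pi (fun _ : Fin n => μ) with hρ
  set Q : ι → Set (Fin n → S) := fun I => pi univ (fun _ : Fin n => I.1) with hQ
  have hQC : ∀ I : ι, MeasurableSet[C S n] (Q I) := fun I => measurableSet_C_pi hn I.2.1
  have hQm : ∀ I : ι, MeasurableSet (Q I) := fun I => hC_le _ (hQC I)
  have hQfin : ∀ I : ι, ρ (Q I) < ⊤ := by
    intro I
    rw [hρ, hQ, Measure.pi_pi]
    simp only [Finset.prod_const, Finset.card_univ, Fintype.card_fin]
    exact ENNReal.pow_lt_top I.2.2.2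
  obtain ⟨ν, hνfin, hρν, hνρ⟩ := exists_isFiniteMeasure_absolutelyContinuous ρ
  set csup := ⨆ f : ℕ → ι, ν (⋃ m, Q (f m)) with hcsup
  have hcne : csup ≠ ⊤ := by
    refine ne_top_of_le_ne_top (measure_ne_top ν univ) (iSup_le fun f => ?_)
    exact measure_mono (subset_univ _)
  obtain ⟨F2, hU⟩ : ∃ F2 : ℕ → ι, ν (⋃ m, Q (F2 m)) = csup := by
    rcases eq_or_ne csup 0 with hc0 | hc0
    · refine ⟨fun _ => Classical.arbitrary ι, le_antisymm ?_ (hc0 ▸ (zero_le))⟩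
      rw [hc0] at hcsup ⊢
      exact le_iSup (fun f : ℕ → ι => ν (⋃ m, Q (f m))) _ |>.trans hcsup.symm.le
    · have hstep : ∀ k : ℕ, ∃ f : ℕ → ι, csup - (k : ℝ≥0∞)⁻¹ < ν (⋃ m, Q (f m)) := by
        intro k
        have hlt : csup - (k : ℝ≥0∞)⁻¹ < csup :=
          ENNReal.sub_lt_self hcne hc0 (ENNReal.inv_ne_zero.mpr (ENNReal.natCast_ne_top k))
        rw [hcsup] at hlt
        exact lt_iSup_iff.mp hlt
      choose fs hfs using hstep
      refine ⟨fun m : ℕ => fs (Nat.unpair m).1 (Nat.unpair m).2, le_antisymm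
        (le_iSup (fun f : ℕ → ι => ν (⋃ m, Q (f m))) _) ?_⟩
      refine ENNReal.le_of_forall_pos_le_add fun ε hε _ => ?_
      obtain ⟨k, hk⟩ := ENNReal.exists_inv_nat_lt
        (a := (ε : ℝ≥0∞)) (by exact_mod_cast hε.ne')
      have h1 : csup - (k : ℝ≥0∞)⁻¹ ≤ ν (⋃ m, Q (fs (Nat.unpair m).1 (Nat.unpair m).2)) := by
        refine (hfs k).le.trans (measure_mono ?_)
        refine iUnion_subset fun m => ?_
        refine subset_iUnion_of_subset (Nat.pair k m) ?_
        rw [Nat.unpair_pair]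
      have h2 : csup ≤ ν (⋃ m, Q (fs (Nat.unpair m).1 (Nat.unpair m).2)) + (k : ℝ≥0∞)⁻¹ :=
        tsub_le_iff_right.mp h1
      exact h2.trans (add_le_add_right hk.le _)
  set U := ⋃ m, Q (F2 m) with hUdef
  have hUm : MeasurableSet U := MeasurableSet.iUnion fun m => hQm _
  have hmax : ∀ I : ι, ρ (Q I \ U) = 0 := by
    intro I
    refine hρν ?_
    have hd : Disjoint U (Q I \ U) := disjoint_sdiff_self_right
    have hsum : ν U + ν (Q I \ U) ≤ csup := by
      rw [← measure_union hd ((hQm I).diff hUm)]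
      set f' : ℕ → ι := fun m => if m = 0 then I else F2 (m - 1) with hf'
      have hset : U ∪ (Q I \ U) = ⋃ m, Q (f' m) := by
        rw [union_comm, diff_union_self]
        ext x
        simp only [hUdef, mem_union, mem_iUnion]
        constructor
        · rintro (hx | ⟨m, hm⟩)
          · exact ⟨0, by simp only [hf', if_pos rfl]; exact hx⟩
          · refine ⟨m + 1, ?_⟩
            simp only [hf', Nat.succ_ne_zero, if_false, Nat.add_sub_cancel]
            exact hm
        · rintro ⟨m, hm⟩
          rcases Nat.eq_zero_or_pos m with rfl | hm0
          · exact Or.inl (by simpa only [hf', if_pos rfl] using hm)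
          · refine Or.inr ⟨m - 1, ?_⟩
            simpa only [hf', if_neg (Nat.pos_iff_ne_zero.mp hm0)] using hm
      rw [hset]
      exact le_iSup (fun f : ℕ → ι => ν (⋃ m, Q (f m))) f'
    rw [← hU] at hsum
    have hle0 : ν (Q I \ U) ≤ 0 :=
      ENNReal.le_of_add_le_add_left (measure_ne_top ν U) (by rw [add_zero]; exact hsum)
    exact le_antisymm hle0 ((zero_le))
  -- the weight function
  set wt : ℕ → ℝ≥0∞ := fun m => (2 ^ m : ℝ≥0∞)⁻¹ * (ρ (Q (F2 m)) + 1)⁻¹ with hwt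
  have hwtne : ∀ m, wt m ≠ 0 := by
    intro m
    refine mul_ne_zero (ENNReal.inv_ne_zero.mpr ?_) (ENNReal.inv_ne_zero.mpr ?_)
    · exact ENNReal.pow_ne_top ENNReal.ofNat_ne_top
    · exact ENNReal.add_ne_top.mpr ⟨(hQfin _).ne, ENNReal.one_ne_top⟩
  set w : (Fin n → S) → ℝ≥0∞ := fun x => ∑' m, (Q (F2 m)).indicator (fun _ => wt m) x with hw
  have hwC : Measurable[C S n] w :=
    Measurable.ennreal_tsum fun m => measurable_const.indicator (hQC _)
  have hwm : Measurable w := hwC.mono hC_le le_rfl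
  have hwint : ∫⁻ x, w x ∂ρ ≠ ⊤ := by
    rw [hw, lintegral_tsum fun m => (measurable_const.indicator (hQm _)).aemeasurable]
    have hb : ∀ m : ℕ, ∫⁻ x, (Q (F2 m)).indicator (fun _ => wt m) x ∂ρ ≤ (2 ^ m : ℝ≥0∞)⁻¹ := by
      intro m
      rw [lintegral_indicator_const (hQm _), hwt, mul_assoc]
      have h1 : (ρ (Q (F2 m)) + 1)⁻¹ * ρ (Q (F2 m)) ≤ 1 := by
        have h2 : (ρ (Q (F2 m)) + 1)⁻¹ * ρ (Q (F2 m))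
            ≤ (ρ (Q (F2 m)) + 1)⁻¹ * (ρ (Q (F2 m)) + 1) :=
          mul_le_mul_right (le_add_right le_rfl) _
        rwa [ENNReal.inv_mul_cancel (by simp)
          (ENNReal.add_ne_top.mpr ⟨(hQfin _).ne, ENNReal.one_ne_top⟩)] at h2
      calc (2 ^ m : ℝ≥0∞)⁻¹ * ((ρ (Q (F2 m)) + 1)⁻¹ * ρ (Q (F2 m)))
          ≤ (2 ^ m : ℝ≥0∞)⁻¹ * 1 := mul_le_mul_right h1 _
        _ = (2 ^ m : ℝ≥0∞)⁻¹ := mul_one _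
    refine ne_top_of_le_ne_top ?_ (ENNReal.tsum_le_tsum hb)
    rw [show (fun m : ℕ => (2 ^ m : ℝ≥0∞)⁻¹) = fun m : ℕ => (2⁻¹ : ℝ≥0∞) ^ m by
      funext m; rw [ENNReal.inv_pow], ENNReal.tsum_geometric]
    simp [ENNReal.sub_half]
  set lam : Measure (Fin n → S) := ρ.withDensity w with hlam
  haveI : IsFiniteMeasure lam := by
    constructor
    rw [hlam, withDensity_apply _ MeasurableSet.univ, setLIntegral_univ]
    exact lt_top_iff_ne_top.mpr hwint
  have hwpos : ∀ x ∈ U, w x ≠ 0 := by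
    intro x hx h0
    rw [hUdef, mem_iUnion] at hx
    obtain ⟨m, hm⟩ := hx
    have hle : (Q (F2 m)).indicator (fun _ => wt m) x ≤ w x := ENNReal.le_tsum m
    rw [h0, nonpos_iff_eq_zero, indicator_of_mem hm] at hle
    exact hwtne m hle
  -- conditional expectation
  clear_value lam
  set g : (Fin n → S) → ℝ := condExp (C S n) lam (A.indicator fun _ => (1 : ℝ)) with hg
  have hgC : Measurable[C S n] g := stronglyMeasurable_condExp.measurable
  have hgm : Measurable g := hgC.mono hC_le le_rfl
  have hg0 : 0 ≤ᵐ[lam] g :=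
    condExp_nonneg (Filter.Eventually.of_forall fun x =>
      indicator_nonneg (fun _ _ => zero_le_one) x)
  have hindint : Integrable (A.indicator fun _ => (1 : ℝ)) lam :=
    (integrable_const (1 : ℝ)).indicator hA
  set Gf : (Fin n → S) → ℝ≥0∞ := fun x => ENNReal.ofReal (g x) with hGf
  have hGfm : Measurable Gf := hgm.ennreal_ofReal
  set indE : (Fin n → S) → ℝ≥0∞ := A.indicator (fun _ => (1 : ℝ≥0∞)) with hindE
  have hindEm : Measurable indE := measurable_const.indicator hA
  have halphabeta : ∀ s, MeasurableSet[C S n] s →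
      lam.withDensity Gf s = lam.withDensity indE s := by
    intro s hs
    have hs' : MeasurableSet s := hC_le _ hs
    rw [withDensity_apply _ hs', withDensity_apply _ hs']
    have e1 : ∫⁻ x in s, Gf x ∂lam = ENNReal.ofReal (∫ x in s, g x ∂lam) :=
      (ofReal_integral_eq_lintegral_ofReal integrable_condExp.restrict
        (ae_restrict_of_ae hg0)).symm
    have e2 : ∫ x in s, g x ∂lam = ∫ x in s, A.indicator (fun _ => (1 : ℝ)) x ∂lam :=
      setIntegral_condExp hC_le hindint hs
    have e3 : ∫ x in s, A.indicator (fun _ => (1 : ℝ)) x ∂lam = (lam (A ∩ s)).toReal := by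
      rw [integral_indicator_const (1 : ℝ) hA, measureReal_def, Measure.restrict_apply hA, smul_eq_mul, mul_one]
    have e4 : ∫⁻ x in s, indE x ∂lam = lam (A ∩ s) := by
      rw [hindE, lintegral_indicator_const hA, one_mul, Measure.restrict_apply hA]
    rw [e1, e2, e3, e4, ENNReal.ofReal_toReal (measure_ne_top _ _)]
  refine ⟨g, hgC, ?_⟩
  rintro P ⟨I, hIv, hpos, hfin, rfl⟩ s hs
  set It : ι := ⟨I, hIv, hpos, hfin⟩ with hIt
  have hIm : MeasurableSet I := measurableSet_of_interval hIv
  set κ : ℝ≥0∞ := (μ I)⁻¹ ^ n with hκ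
  have hκne : κ ≠ ⊤ := ENNReal.pow_ne_top (ENNReal.inv_ne_top.mpr hpos.ne')
  have hPrep : (Measure.pi fun _ : Fin n => condLaw μ I)
      = ρ.withDensity ((Q It).indicator fun _ => κ) := by
    rw [withDensity_indicator (hQm It), withDensity_const]
    have : (fun _ : Fin n => condLaw μ I) = fun _ : Fin n => (μ I)⁻¹ • μ.restrict I := rfl
    rw [this, pi_smul n _ (ENNReal.inv_ne_top.mpr hpos.ne'), pi_restrict n μ hIm]
  set u : (Fin n → S) → ℝ≥0∞ := fun x => (Q It).indicator (fun _ => κ) x * (w x)⁻¹ with hu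
  have huC : Measurable[C S n] u := (measurable_const.indicator (hQC It)).mul hwC.inv
  have hum : Measurable u := huC.mono hC_le le_rfl
  have hPu : (Measure.pi fun _ : Fin n => condLaw μ I) = lam.withDensity u := by
    rw [hPrep, hlam, ← withDensity_mul ρ hwm hum]
    refine withDensity_congr_ae ?_
    filter_upwards [ae_lt_top hwm hwint, measure_eq_zero_iff_ae_notMem.mp (hmax It)]
      with x hx1 hx2
    by_cases hxQ : x ∈ Q It
    · have hxU : x ∈ U := by
        by_contra hxU
        exact hx2 ⟨hxQ, hxU⟩
      have hw0 : w x ≠ 0 := hwpos x hxU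
      rw [indicator_of_mem hxQ]
      show κ = w x * ((Q It).indicator (fun _ => κ) x * (w x)⁻¹)
      rw [indicator_of_mem hxQ, mul_comm κ, ← mul_assoc,
        ENNReal.mul_inv_cancel hw0 hx1.ne, one_mul]
    · rw [indicator_of_notMem hxQ]
      show (0 : ℝ≥0∞) = w x * ((Q It).indicator (fun _ => κ) x * (w x)⁻¹)
      rw [indicator_of_notMem hxQ, zero_mul, mul_zero]
  have hs' : MeasurableSet s := hC_le _ hs
  rw [hPu]
  have e1 : (lam.withDensity u) (s ∩ A) = ∫⁻ x in s ∩ A, u x ∂lam :=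
    withDensity_apply _ (hs'.inter hA)
  have e2 : ∫⁻ x in s ∩ A, u x ∂lam = ∫⁻ x in s, u x ∂(lam.withDensity indE) := by
    rw [restrict_withDensity hs', lintegral_withDensity_eq_lintegral_mul _ hindEm hum]
    have hfe : (fun x => (indE * u) x) = A.indicator u := by
      funext x
      by_cases hxA : x ∈ A
      · simp [hindE, indicator_of_mem hxA]
      · simp [hindE, indicator_of_notMem hxA]
    rw [show ((indE * u) : (Fin n → S) → ℝ≥0∞) = A.indicator u from hfe,
      lintegral_indicator hA, Measure.restrict_restrict hA, inter_comm A s]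
  have e3 : ∫⁻ x in s, u x ∂(lam.withDensity indE) = ∫⁻ x in s, u x ∂(lam.withDensity Gf) := by
    have htr : ((lam.withDensity Gf).restrict s).trim hC_le
        = ((lam.withDensity indE).restrict s).trim hC_le := by
      refine @Measure.ext _ (C S n) _ _ fun t ht => ?_
      rw [trim_measurableSet_eq hC_le ht, trim_measurableSet_eq hC_le ht,
        Measure.restrict_apply (hC_le _ ht), Measure.restrict_apply (hC_le _ ht)]
      exact halphabeta _ (ht.inter hs)
    calc ∫⁻ x in s, u x ∂(lam.withDensity indE)
        = ∫⁻ x, u x ∂(((lam.withDensity indE).restrict s).trim hC_le) :=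
          (lintegral_trim hC_le huC).symm
      _ = ∫⁻ x, u x ∂(((lam.withDensity Gf).restrict s).trim hC_le) := by rw [htr]
      _ = ∫⁻ x in s, u x ∂(lam.withDensity Gf) := lintegral_trim hC_le huC
  have e4 : ∫⁻ x in s, u x ∂(lam.withDensity Gf) = ∫⁻ x in s, Gf x ∂(lam.withDensity u) := by
    rw [restrict_withDensity hs', restrict_withDensity hs',
      lintegral_withDensity_eq_lintegral_mul _ hGfm hum,
      lintegral_withDensity_eq_lintegral_mul _ hum hGfm]
    refine lintegral_congr fun x => ?_
    simp [mul_comm]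
  have hPlam : lam.withDensity u ≪ lam := withDensity_absolutelyContinuous lam u
  have e5 : ∫ x in s, g x ∂(lam.withDensity u)
      = (∫⁻ x in s, Gf x ∂(lam.withDensity u)).toReal := by
    refine integral_eq_lintegral_of_nonneg_ae ?_ (hgm.aestronglyMeasurable)
    exact ((Measure.absolutelyContinuous_of_le Measure.restrict_le_self).trans hPlam).ae_le hg0
  rw [e5, ← e4, ← e3, ← e2, ← e1]

end MinMaxAux

/-- **Corollary (c).** On a measurable subspace `S` of the extended real line, the pair
`(min_{i=1}^n Xᵢ, max_{i=1}^n Xᵢ)` is complete for the model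
`{μ(·|I)^{⊗n} : I interval in S, 0 < μ(I) < ∞}`, and also sufficient if `μ` is σ-finite. -/
theorem min_max_complete_for_intervals
    (S : Set EReal) (μ : Measure S) (n : ℕ) (hn : 0 < n) :
    IsLSComplete MeasurableSpace.pi
        (MeasurableSpace.comap
          (fun x : Fin n → S => ((⨅ i, (x i : EReal), ⨆ i, (x i : EReal)) : EReal × EReal))
          inferInstance)
        {P : Measure (Fin n → S) | ∃ I : Set S,
          (∀ x ∈ I, ∀ z ∈ I, ∀ y : S, x ≤ y → y ≤ z → y ∈ I) ∧ 0 < μ I ∧ μ I < ⊤ ∧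
          P = Measure.pi fun _ : Fin n => condLaw μ I} ∧
      (SigmaFinite μ →
        IsLSSufficient MeasurableSpace.pi
          (MeasurableSpace.comap
            (fun x : Fin n → S => ((⨅ i, (x i : EReal), ⨆ i, (x i : EReal)) : EReal × EReal))
            inferInstance)
          {P : Measure (Fin n → S) | ∃ I : Set S,
            (∀ x ∈ I, ∀ z ∈ I, ∀ y : S, x ≤ y → y ≤ z → y ∈ I) ∧ 0 < μ I ∧ μ I < ⊤ ∧
            P = Measure.pi fun _ : Fin n => condLaw μ I}) := by
  exact ⟨MinMaxAux.completeness S μ n hn, fun hσ => MinMaxAux.sufficiency S μ n hn⟩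
end

section
/- There exists a model P = {P_θ : θ ∈ Θ₁ × Θ₂} on a finite measurable space with sub-σ-algebras C₁, C₂ such that for each θ₂, C₁ is complete and sufficient for {P_{θ₁,θ₂} : θ₁ ∈ Θ₁}, and for each θ₁, C₂ is complete and sufficient for {P_{θ₁,θ₂} : θ₂ ∈ Θ₂}, yet C₁ ⋁ C₂ is not sufficient for P. Concretely: X = {1,2,3} with power set σ-algebra, Θ₁ = Θ₂ = {1,2}, densities with respect to counting measure f_{1,1} = 1/3, f_{1,2} = f_{2,1} = 1_{{3}}, f_{2,2}(x) = x/6, and C₁ = C₂ = {∅, {1,2}, {3}, X}. -/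
open MeasureTheory
open scoped NNReal ENNReal

/-! Helpers -/

noncomputable def m (a b c : ℝ≥0) : @Measure (Fin 3) ⊤ :=
  (a : ℝ≥0∞) • Measure.dirac 0 + (b : ℝ≥0∞) • Measure.dirac 1 + (c : ℝ≥0∞) • Measure.dirac 2

lemma m_apply (a b c : ℝ≥0) (s : Set (Fin 3)) [DecidablePred (· ∈ s)] :
    m a b c s = (if (0:Fin 3) ∈ s then (a:ℝ≥0∞) else 0) + (if (1:Fin 3) ∈ s then (b:ℝ≥0∞) else 0)
      + (if (2:Fin 3) ∈ s then (c:ℝ≥0∞) else 0) := by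
  simp [m, Measure.dirac_apply, Set.indicator_apply, mul_comm]

lemma m_apply_toReal (a b c : ℝ≥0) (s : Set (Fin 3)) [DecidablePred (· ∈ s)] :
    ((m a b c) s).toReal = (if (0:Fin 3) ∈ s then (a:ℝ) else 0)
      + (if (1:Fin 3) ∈ s then (b:ℝ) else 0) + (if (2:Fin 3) ∈ s then (c:ℝ) else 0) := by
  rw [m_apply]
  by_cases h0 : (0:Fin 3) ∈ s <;> by_cases h1 : (1:Fin 3) ∈ s <;> by_cases h2 : (2:Fin 3) ∈ s <;>
    simp [h0, h1, h2, ← ENNReal.coe_add]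

instance (a b c : ℝ≥0) : IsFiniteMeasure (m a b c) := by
  constructor
  rw [m_apply]
  simp

lemma m_prob (a b c : ℝ≥0) (h : a + b + c = 1) : IsProbabilityMeasure (m a b c) := by
  constructor
  rw [m_apply]
  simp only [Set.mem_univ, if_true]
  rw [← ENNReal.coe_add, ← ENNReal.coe_add, h, ENNReal.coe_one]

lemma m_setInt (a b c : ℝ≥0) (f : Fin 3 → ℝ) (s : Set (Fin 3)) [DecidablePred (· ∈ s)] :
    ∫ x in s, f x ∂(m a b c) =
      (if (0:Fin 3) ∈ s then (a:ℝ) * f 0 else 0) + (if (1:Fin 3) ∈ s then (b:ℝ) * f 1 else 0)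
        + (if (2:Fin 3) ∈ s then (c:ℝ) * f 2 else 0) := by
  rw [integral_fintype .of_finite, Fin.sum_univ_three, measureReal_def, measureReal_def,
    measureReal_def]
  rw [Measure.restrict_apply MeasurableSet.of_discrete,
      Measure.restrict_apply MeasurableSet.of_discrete,
      Measure.restrict_apply MeasurableSet.of_discrete]
  rw [m_apply, m_apply, m_apply]
  by_cases h0 : (0:Fin 3) ∈ s <;> by_cases h1 : (1:Fin 3) ∈ s <;> by_cases h2 : (2:Fin 3) ∈ s <;>
    simp [h0, h1, h2, mul_comm]

lemma m_int (a b c : ℝ≥0) (f : Fin 3 → ℝ) :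
    ∫ x, f x ∂(m a b c) = (a:ℝ) * f 0 + (b:ℝ) * f 1 + (c:ℝ) * f 2 := by
  rw [← Measure.restrict_univ (μ := m a b c), m_setInt]
  simp

def fB : Fin 3 → Bool := fun x => decide (x = 2)

def Csub : MeasurableSpace (Fin 3) := MeasurableSpace.comap fB ⊤

lemma measC (h : Bool → ℝ) : Measurable[Csub] (fun x => h (fB x)) :=
  fun t _ => ⟨h ⁻¹' t, trivial, rfl⟩

lemma eq01 (h : Fin 3 → ℝ) (hm : Measurable[Csub] h) : h 0 = h 1 := by
  obtain ⟨t, -, ht⟩ := hm (measurableSet_singleton (h 0))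
  have h0 : (0 : Fin 3) ∈ fB ⁻¹' t := by rw [ht]; exact rfl
  have h1 : (1 : Fin 3) ∈ fB ⁻¹' t := h0
  rw [ht] at h1
  exact h1.symm

lemma mem0 (t : Set Bool) : (0:Fin 3) ∈ fB ⁻¹' t ↔ false ∈ t := Iff.rfl
lemma mem1 (t : Set Bool) : (1:Fin 3) ∈ fB ⁻¹' t ↔ false ∈ t := Iff.rfl
lemma mem2 (t : Set Bool) : (2:Fin 3) ∈ fB ⁻¹' t ↔ true ∈ t := Iff.rfl

lemma fB0 : fB 0 = false := rfl
lemma fB1 : fB 1 = false := rfl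
lemma fB2 : fB 2 = true := rfl

noncomputable def Pm : Fin 2 × Fin 2 → @Measure (Fin 3) ⊤ := fun θ =>
  if θ = (0,0) then m (1/3) (1/3) (1/3)
  else if θ = (1,1) then m (1/6) (1/3) (1/2)
  else m 0 0 1


lemma suff_A : ∀ A : Set (Fin 3), ∃ g : Fin 3 → ℝ, Measurable[Csub] g ∧
    ∀ s : Set (Fin 3), MeasurableSet[Csub] s →
      (∫ x in s, g x ∂(m (1/3) (1/3) (1/3)) = ((m (1/3) (1/3) (1/3)) (s ∩ A)).toReal ∧
       ∫ x in s, g x ∂(m 0 0 1) = ((m 0 0 1) (s ∩ A)).toReal) := by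
  intro A
  classical
  refine ⟨_, measC (fun b => if b then (if (2:Fin 3) ∈ A then (1:ℝ) else 0)
    else ((if (0:Fin 3) ∈ A then (1:ℝ) else 0) + (if (1:Fin 3) ∈ A then (1:ℝ) else 0))/2), ?_⟩
  rintro s ⟨t, -, rfl⟩
  constructor <;> rw [m_setInt, m_apply_toReal] <;>
    simp only [Set.mem_inter_iff, mem0, mem1, mem2, fB0, fB1, fB2] <;>
    by_cases hf : false ∈ t <;> by_cases ht : true ∈ t <;>
    by_cases h0 : (0:Fin 3) ∈ A <;> by_cases h1 : (1:Fin 3) ∈ A <;> by_cases h2 : (2:Fin 3) ∈ A <;>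
    simp [hf, ht, h0, h1, h2] <;> push_cast <;> norm_num

lemma suff_B : ∀ A : Set (Fin 3), ∃ g : Fin 3 → ℝ, Measurable[Csub] g ∧
    ∀ s : Set (Fin 3), MeasurableSet[Csub] s →
      (∫ x in s, g x ∂(m 0 0 1) = ((m 0 0 1) (s ∩ A)).toReal ∧
       ∫ x in s, g x ∂(m (1/6) (1/3) (1/2)) = ((m (1/6) (1/3) (1/2)) (s ∩ A)).toReal) := by
  intro A
  classical
  refine ⟨_, measC (fun b => if b then (if (2:Fin 3) ∈ A then (1:ℝ) else 0)
    else ((if (0:Fin 3) ∈ A then (1:ℝ) else 0) + 2*(if (1:Fin 3) ∈ A then (1:ℝ) else 0))/3), ?_⟩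
  rintro s ⟨t, -, rfl⟩
  constructor <;> rw [m_setInt, m_apply_toReal] <;>
    simp only [Set.mem_inter_iff, mem0, mem1, mem2, fB0, fB1, fB2] <;>
    by_cases hf : false ∈ t <;> by_cases ht : true ∈ t <;>
    by_cases h0 : (0:Fin 3) ∈ A <;> by_cases h1 : (1:Fin 3) ∈ A <;> by_cases h2 : (2:Fin 3) ∈ A <;>
    simp [hf, ht, h0, h1, h2] <;> push_cast <;> norm_num

lemma comp_A : ∀ h : Fin 3 → ℝ, h 0 = h 1 →
    ∫ x, h x ∂(m (1/3) (1/3) (1/3)) = 0 → ∫ x, h x ∂(m 0 0 1) = 0 → ∀ x, h x = 0 := by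
  intro h e01 z1 z2
  rw [m_int] at z1 z2
  push_cast at z1 z2
  have h0' : h 0 = 0 := by linarith
  have h1' : h 1 = 0 := by linarith
  have h2' : h 2 = 0 := by linarith
  intro x
  fin_cases x <;> first | exact h0' | exact h1' | exact h2'

lemma comp_B : ∀ h : Fin 3 → ℝ, h 0 = h 1 →
    ∫ x, h x ∂(m 0 0 1) = 0 → ∫ x, h x ∂(m (1/6) (1/3) (1/2)) = 0 → ∀ x, h x = 0 := by
  intro h e01 z1 z2
  rw [m_int] at z1 z2
  push_cast at z1 z2
  have h0' : h 0 = 0 := by linarith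
  have h1' : h 1 = 0 := by linarith
  have h2' : h 2 = 0 := by linarith
  intro x
  fin_cases x <;> first | exact h0' | exact h1' | exact h2'


/-- **Counterexample.** There is a model on a finite measurable space (here `Fin 3` with
its power set σ-algebra), indexed by `Fin 2 × Fin 2`, and sub-σ-algebras `C₁, C₂` such
that `C₁` is complete sufficient for each submodel with fixed second parameter, `C₂` is
complete sufficient for each submodel with fixed first parameter, and yet `C₁ ⊔ C₂` is
not sufficient for the whole model. -/
theorem exists_partially_complete_sufficient_but_join_insufficient :
    ∃ P : Fin 2 × Fin 2 → @Measure (Fin 3) ⊤,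
      ∃ C₁ C₂ : MeasurableSpace (Fin 3),
        C₁ ≤ ⊤ ∧ C₂ ≤ ⊤ ∧
        (∀ θ, @IsProbabilityMeasure (Fin 3) ⊤ (P θ)) ∧
        (∀ θ₂ : Fin 2, IsLSComplete ⊤ C₁ {R | ∃ θ₁, R = P (θ₁, θ₂)} ∧
          IsLSSufficient ⊤ C₁ {R | ∃ θ₁, R = P (θ₁, θ₂)}) ∧
        (∀ θ₁ : Fin 2, IsLSComplete ⊤ C₂ {R | ∃ θ₂, R = P (θ₁, θ₂)} ∧
          IsLSSufficient ⊤ C₂ {R | ∃ θ₂, R = P (θ₁, θ₂)}) ∧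
        ¬ IsLSSufficient ⊤ (C₁ ⊔ C₂) (Set.range P) := by
  refine ⟨Pm, Csub, Csub, le_top, le_top, ?_, ?_, ?_, ?_⟩
  · -- probability
    intro θ
    fin_cases θ
    · exact m_prob (1/3) (1/3) (1/3) (by rw [← NNReal.coe_inj]; push_cast; norm_num)
    · exact m_prob 0 0 1 (by rw [← NNReal.coe_inj]; push_cast; norm_num)
    · exact m_prob 0 0 1 (by rw [← NNReal.coe_inj]; push_cast; norm_num)
    · exact m_prob (1/6) (1/3) (1/2) (by rw [← NNReal.coe_inj]; push_cast; norm_num)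
  · -- C₁ for fixed θ₂
    intro θ₂
    constructor
    · intro h hm hint hz P hP
      have e01 := eq01 h hm
      fin_cases θ₂
      · have key := comp_A h e01 (hz _ ⟨0, rfl⟩) (hz _ ⟨1, rfl⟩)
        exact Filter.Eventually.of_forall key
      · have key := comp_B h e01 (hz _ ⟨0, rfl⟩) (hz _ ⟨1, rfl⟩)
        exact Filter.Eventually.of_forall key
    · intro A _
      fin_cases θ₂
      · obtain ⟨g, hgm, hgs⟩ := suff_A A
        refine ⟨g, hgm, ?_⟩
        rintro P ⟨θ₁, rfl⟩ s hs
        fin_cases θ₁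
        · exact (hgs s hs).1
        · exact (hgs s hs).2
      · obtain ⟨g, hgm, hgs⟩ := suff_B A
        refine ⟨g, hgm, ?_⟩
        rintro P ⟨θ₁, rfl⟩ s hs
        fin_cases θ₁
        · exact (hgs s hs).1
        · exact (hgs s hs).2
  · -- C₂ for fixed θ₁
    intro θ₁
    constructor
    · intro h hm hint hz P hP
      have e01 := eq01 h hm
      fin_cases θ₁
      · have key := comp_A h e01 (hz _ ⟨0, rfl⟩) (hz _ ⟨1, rfl⟩)
        exact Filter.Eventually.of_forall key
      · have key := comp_B h e01 (hz _ ⟨0, rfl⟩) (hz _ ⟨1, rfl⟩)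
        exact Filter.Eventually.of_forall key
    · intro A _
      fin_cases θ₁
      · obtain ⟨g, hgm, hgs⟩ := suff_A A
        refine ⟨g, hgm, ?_⟩
        rintro P ⟨θ₂, rfl⟩ s hs
        fin_cases θ₂
        · exact (hgs s hs).1
        · exact (hgs s hs).2
      · obtain ⟨g, hgm, hgs⟩ := suff_B A
        refine ⟨g, hgm, ?_⟩
        rintro P ⟨θ₂, rfl⟩ s hs
        fin_cases θ₂
        · exact (hgs s hs).1
        · exact (hgs s hs).2
  · -- insufficiency
    intro hsuff
    classical
    rw [sup_idem] at hsuff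
    obtain ⟨g, hgm, hg⟩ := hsuff {0} MeasurableSet.of_discrete
    have e01 := eq01 g hgm
    have h1 := hg (Pm (0,0)) ⟨(0,0), rfl⟩ (fB ⁻¹' {false}) ⟨{false}, trivial, rfl⟩
    have h2 := hg (Pm (1,1)) ⟨(1,1), rfl⟩ (fB ⁻¹' {false}) ⟨{false}, trivial, rfl⟩
    have H1 : ∫ x in fB ⁻¹' {false}, g x ∂(m (1/3) (1/3) (1/3))
        = ((m (1/3) (1/3) (1/3)) (fB ⁻¹' {false} ∩ {0})).toReal := h1
    have H2 : ∫ x in fB ⁻¹' {false}, g x ∂(m (1/6) (1/3) (1/2))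
        = ((m (1/6) (1/3) (1/2)) (fB ⁻¹' {false} ∩ {0})).toReal := h2
    rw [m_setInt, m_apply_toReal] at H1 H2
    simp only [Set.mem_inter_iff, mem0, mem1, mem2, Set.mem_singleton_iff] at H1 H2
    norm_num at H1 H2
    push_cast at H1 H2
    linarith
end

section
/- There exists a non-σ-finite measure space (X, A, μ) and an intersection-stable collection E ⊆ A such that the σ-algebra C := σ(E : E ∈ E) is not sufficient for the model P := {μ(·|E) : E ∈ E, 0 < μ(E) < ∞}. Concretely: X = ℝ with its Borel σ-algebra, μ the counting measure, E the collection of all singletons together with the empty set, and n = 1; then C is the countable-cocountable σ-algebra and is not sufficient for the family of all Dirac measures {δ_x : x ∈ ℝ}. -/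
open MeasureTheory

lemma cc_of_mem_generate {A : Set ℝ}
    (hA : MeasurableSet[MeasurableSpace.generateFrom
      {s : Set ℝ | (∃ x : ℝ, s = {x}) ∨ s = ∅}] A) :
    A.Countable ∨ Aᶜ.Countable := by
  induction hA with
  | basic s hs =>
    rcases hs with ⟨x, rfl⟩ | rfl
    · exact Or.inl (Set.countable_singleton x)
    · exact Or.inl Set.countable_empty
  | empty => exact Or.inl Set.countable_empty
  | compl s _ ih =>
    rcases ih with h | h
    · exact Or.inr (by simpa)
    · exact Or.inl h
  | iUnion f _ ih =>
    by_cases h : ∀ i, (f i).Countable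
    · exact Or.inl (Set.countable_iUnion h)
    · push_neg at h
      obtain ⟨i, hi⟩ := h
      rcases ih i with h' | h'
      · exact absurd h' hi
      · refine Or.inr (h'.mono ?_)
        rw [Set.compl_iUnion]
        exact Set.iInter_subset _ i

lemma condLaw_singleton (x : ℝ) :
    condLaw Measure.count {x} = Measure.dirac x := by
  have h1 : Measure.count ({x} : Set ℝ) = 1 := Measure.count_singleton x
  ext A hA
  rw [condLaw, h1, Measure.smul_apply, Measure.restrict_apply hA,
    Measure.dirac_apply' _ hA]
  by_cases hx : x ∈ A
  · rw [Set.inter_eq_right.mpr (by simpa), h1, Set.indicator_of_mem hx]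
    simp
  · rw [Set.inter_singleton_eq_empty.mpr hx, Set.indicator_of_notMem hx]
    simp

/-- **Counterexample.** The counting measure on `ℝ` (with the Borel σ-algebra) is not
σ-finite, and the σ-algebra generated by the singletons and the empty set (the
countable–cocountable σ-algebra) is not sufficient for the model of conditional laws
`{μ(·|E) : E a singleton or ∅, 0 < μ(E) < ∞}`, i.e. for the family of Dirac measures. -/
theorem counting_measure_singleton_truncations_not_sufficient :
    ¬ SigmaFinite (Measure.count : Measure ℝ) ∧
      ¬ IsLSSufficient (inferInstance : MeasurableSpace ℝ)
          (MeasurableSpace.generateFrom {s : Set ℝ | (∃ x : ℝ, s = {x}) ∨ s = ∅})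
          {P : Measure ℝ | ∃ E : Set ℝ, ((∃ x : ℝ, E = {x}) ∨ E = ∅) ∧
            0 < Measure.count E ∧ Measure.count E < ⊤ ∧
            P = condLaw Measure.count E} := by
  constructor
  · intro h
    have : (Set.univ : Set ℝ).Countable := by
      rw [← MeasureTheory.iUnion_spanningSets (Measure.count : Measure ℝ)]
      exact Set.countable_iUnion fun n =>
        ((Measure.count_apply_lt_top).mp
          (measure_spanningSets_lt_top _ n)).countable
    exact Cardinal.not_countable_real this
  · intro hsuff
    obtain ⟨g, hgmeas, hg⟩ := hsuff (Set.Iio 0) measurableSet_Iio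
    -- each dirac x is in the model
    have hmem : ∀ x : ℝ, Measure.dirac x ∈
        {P : Measure ℝ | ∃ E : Set ℝ, ((∃ x : ℝ, E = {x}) ∨ E = ∅) ∧
          0 < Measure.count E ∧ Measure.count E < ⊤ ∧
          P = condLaw Measure.count E} := by
      intro x
      refine ⟨{x}, Or.inl ⟨x, rfl⟩, ?_, ?_, (condLaw_singleton x).symm⟩
      · rw [Measure.count_singleton]; norm_num
      · rw [Measure.count_singleton]; norm_num
    have hgval : ∀ x : ℝ, g x = if x ∈ Set.Iio 0 then 1 else 0 := by
      intro x
      have := hg _ (hmem x) Set.univ MeasurableSet.univ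
      rw [Measure.restrict_univ] at this
      rw [integral_dirac] at this
      rw [this, Set.univ_inter, Measure.dirac_apply' _ measurableSet_Iio]
      by_cases hx : x ∈ Set.Iio 0
      · rw [Set.indicator_of_mem hx, if_pos hx]; simp
      · rw [Set.indicator_of_notMem hx, if_neg hx]; simp
    have hpre : g ⁻¹' {1} = Set.Iio 0 := by
      ext x
      simp only [Set.mem_preimage, Set.mem_singleton_iff, hgval x]
      by_cases hx : x ∈ Set.Iio 0 <;> simp [hx]
    have hC : MeasurableSet[MeasurableSpace.generateFrom
        {s : Set ℝ | (∃ x : ℝ, s = {x}) ∨ s = ∅}] (Set.Iio (0:ℝ)) := by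
      rw [← hpre]
      exact hgmeas (measurableSet_singleton 1)
    rcases cc_of_mem_generate hC with h | h
    · have h1 := h.le_aleph0
      rw [Cardinal.mk_Iio_real 0] at h1
      exact absurd h1 Cardinal.aleph0_lt_continuum.not_ge
    · rw [Set.compl_Iio] at h
      have h1 := h.le_aleph0
      rw [Cardinal.mk_Ici_real 0] at h1
      exact absurd h1 Cardinal.aleph0_lt_continuum.not_ge
end
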